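/- Let ψ : ℝ → ℝ be a positive, twice continuously differentiable probability density, x ∈ ℝ with ψ'(x) ≠ 0, θ > 0, and let A_n = { ε : ψ(x + θε/√n) > ψ(x) }. Then lim_{n→∞} √n ( ∫_{A_n} ε φ(ε) dε + ∫_{A_n^c} (ψ(x + θε/√n)/ψ(x)) ε φ(ε) dε ) = (θ/2)·ψ'(x)/ψ(x), where φ is the standard normal density. -/

import Mathlib

open MeasureTheory Filter

section AuxStmt5
open Real Set Topology


noncomputable def φ0 : ℝ → ℝ := fun ε => (Real.sqrt (2 * Real.pi))⁻¹ * Real.exp (-ε ^ 2 / 2)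

lemma phi0_eq : φ0 = fun ε => (Real.sqrt (2 * Real.pi))⁻¹ * Real.exp (-(2⁻¹:ℝ) * ε ^ 2) := by
  funext ε; simp only [φ0]; congr 1; ring

lemma phi0_cont : Continuous φ0 := by
  rw [phi0_eq]
  exact continuous_const.mul (Real.continuous_exp.comp (continuous_const.mul (continuous_pow 2) : Continuous fun x : ℝ => (-(2⁻¹:ℝ)) * x ^ 2))

lemma phi0_pos (ε : ℝ) : 0 < φ0 ε := by
  rw [phi0_eq]
  positivity

lemma int_sq_exp : Integrable (fun x : ℝ => x ^ 2 * Real.exp (-(2⁻¹:ℝ) * x ^ 2)) := by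
  have h := integrable_rpow_mul_exp_neg_mul_sq (b := (2⁻¹:ℝ)) (by norm_num) (s := 2) (by norm_num)
  have he : ∀ x : ℝ, x ^ (2:ℝ) = x ^ 2 := fun x => by
    rw [show (2:ℝ) = ((2:ℕ):ℝ) by norm_num, Real.rpow_natCast]
  refine h.congr ?_
  filter_upwards with x
  rw [he]

lemma int_mul_phi0 : Integrable (fun ε : ℝ => ε * φ0 ε) := by
  rw [phi0_eq]
  have := (integrable_mul_exp_neg_mul_sq (b := (2⁻¹:ℝ)) (by norm_num)).const_mul
    ((Real.sqrt (2 * Real.pi))⁻¹)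
  refine this.congr ?_
  filter_upwards with x; ring

lemma int_sq_phi0 : Integrable (fun ε : ℝ => ε ^ 2 * φ0 ε) := by
  rw [phi0_eq]
  have := int_sq_exp.const_mul ((Real.sqrt (2 * Real.pi))⁻¹)
  refine this.congr ?_
  filter_upwards with x; ring

lemma odd_integral_zero (f : ℝ → ℝ) (h : ∀ x, f (-x) = - f x) : ∫ x, f x = 0 := by
  have h1 : ∫ x, f (-x) = ∫ x, f x := integral_neg_eq_self f volume
  have h2 : ∫ x, f (-x) = - ∫ x, f x := by
    simp_rw [h]; exact integral_neg f
  linarith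

lemma integral_mul_phi0 : ∫ ε : ℝ, ε * φ0 ε = 0 := by
  apply odd_integral_zero
  intro y; simp [φ0]

lemma integral_abs_mul_phi0 : ∫ ε : ℝ, |ε| * ε * φ0 ε = 0 := by
  apply odd_integral_zero
  intro y; simp [φ0, abs_neg]

lemma int_abs_mul_phi0 : Integrable (fun ε : ℝ => |ε| * ε * φ0 ε) := by
  refine int_sq_phi0.mono' ?_ ?_
  · exact ((continuous_abs.mul continuous_id).mul phi0_cont).aestronglyMeasurable
  · filter_upwards with x
    refine le_of_eq ?_
    rw [Real.norm_eq_abs, abs_mul, abs_mul, abs_abs, abs_of_pos (phi0_pos x),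
      abs_mul_abs_self, ← sq]

lemma integral_sq_exp : ∫ x : ℝ, x ^ 2 * Real.exp (-(2⁻¹:ℝ) * x ^ 2) = Real.sqrt (2 * Real.pi) := by
  have hderiv : ∀ y : ℝ, HasDerivAt (fun x : ℝ => -(x * Real.exp (-(2⁻¹:ℝ) * x ^ 2)))
      ((y ^ 2 - 1) * Real.exp (-(2⁻¹:ℝ) * y ^ 2)) y := by
    intro y
    have h1 : HasDerivAt (fun x : ℝ => -(2⁻¹:ℝ) * x ^ 2) (-(2⁻¹:ℝ) * (2 * y)) y := by
      simpa using (hasDerivAt_pow 2 y).const_mul (-(2⁻¹:ℝ))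
    have h2 := h1.exp
    have h3 : HasDerivAt (fun x : ℝ => x * Real.exp (-(2⁻¹:ℝ) * x ^ 2)) _ y := (hasDerivAt_id y).mul h2
    have h4 : HasDerivAt (fun x : ℝ => -(x * Real.exp (-(2⁻¹:ℝ) * x ^ 2))) _ y := h3.neg
    convert h4 using 1
    simp only [id_eq]
    ring
  have hf' : Integrable (fun x : ℝ => (x ^ 2 - 1) * Real.exp (-(2⁻¹:ℝ) * x ^ 2)) := by
    have := int_sq_exp.sub (integrable_exp_neg_mul_sq (b := (2⁻¹:ℝ)) (by norm_num))
    refine this.congr ?_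
    filter_upwards with x
    simp only [Pi.sub_apply]; ring
  have hf : Integrable (fun x : ℝ => -(x * Real.exp (-(2⁻¹:ℝ) * x ^ 2))) :=
    (integrable_mul_exp_neg_mul_sq (b := (2⁻¹:ℝ)) (by norm_num)).neg
  have h0 : ∫ x : ℝ, (x ^ 2 - 1) * Real.exp (-(2⁻¹:ℝ) * x ^ 2) = 0 :=
    integral_eq_zero_of_hasDerivAt_of_integrable hderiv hf' hf
  have hsub : ∫ x : ℝ, (x ^ 2 - 1) * Real.exp (-(2⁻¹:ℝ) * x ^ 2)
      = (∫ x : ℝ, x ^ 2 * Real.exp (-(2⁻¹:ℝ) * x ^ 2)) - ∫ x : ℝ, Real.exp (-(2⁻¹:ℝ) * x ^ 2) := by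
    rw [← integral_sub int_sq_exp (integrable_exp_neg_mul_sq (by norm_num))]
    congr 1; funext x; ring
  have hg : ∫ x : ℝ, Real.exp (-(2⁻¹:ℝ) * x ^ 2) = Real.sqrt (2 * Real.pi) := by
    have := integral_gaussian (2⁻¹:ℝ)
    rw [this]
    norm_num [mul_comm]
  rw [h0, hg] at hsub
  linarith

lemma integral_sq_phi0 : ∫ ε : ℝ, ε ^ 2 * φ0 ε = 1 := by
  rw [phi0_eq]
  have : ∫ ε : ℝ, ε ^ 2 * ((Real.sqrt (2 * Real.pi))⁻¹ * Real.exp (-(2⁻¹:ℝ) * ε ^ 2))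
      = (Real.sqrt (2 * Real.pi))⁻¹ * ∫ ε : ℝ, ε ^ 2 * Real.exp (-(2⁻¹:ℝ) * ε ^ 2) := by
    rw [← integral_const_mul]
    congr 1; funext x; ring
  rw [this, integral_sq_exp, inv_mul_cancel₀]
  positivity

lemma min_half (a : ℝ) : min 0 a = (a - |a|) / 2 := by
  rcases le_total a 0 with h | h
  · rw [min_eq_right h, abs_of_nonpos h]; ring
  · rw [min_eq_left h, abs_of_nonneg h]; ring

lemma integral_min_phi0 (c : ℝ) : ∫ ε : ℝ, min 0 (c * ε) * (ε * φ0 ε) = c / 2 := by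
  have heq : ∀ ε : ℝ, min 0 (c * ε) * (ε * φ0 ε)
      = (c / 2) * (ε ^ 2 * φ0 ε) - (|c| / 2) * (|ε| * ε * φ0 ε) := by
    intro ε
    rw [min_half, abs_mul]
    ring
  simp_rw [heq]
  rw [integral_sub ((int_sq_phi0).const_mul _) ((int_abs_mul_phi0).const_mul _),
    integral_const_mul, integral_const_mul, integral_sq_phi0, integral_abs_mul_phi0]
  ring


lemma abs_min_zero_le (a : ℝ) : |min 0 a| ≤ |a| := by
  rcases le_total a 0 with h | h
  · rw [min_eq_right h]
  · rw [min_eq_left h, abs_zero]; exact abs_nonneg a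

lemma mul_min_zero (a b : ℝ) (ha : 0 ≤ a) : a * min 0 b = min 0 (a * b) := by
  rcases le_total b 0 with h | h
  · rw [min_eq_right h, min_eq_right (mul_nonpos_of_nonneg_of_nonpos ha h)]
  · rw [min_eq_left h, min_eq_left (mul_nonneg ha h), mul_zero]

lemma sqrt_nat_tendsto : Tendsto (fun n : ℕ => Real.sqrt n) atTop atTop := by
  have h : Tendsto Real.sqrt atTop atTop := by
    rw [tendsto_atTop_atTop]
    intro b
    refine ⟨(max b 0) ^ 2, fun a ha => ?_⟩
    calc b ≤ max b 0 := le_max_left _ _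
      _ = Real.sqrt ((max b 0) ^ 2) := (Real.sqrt_sq (le_max_right _ _)).symm
      _ ≤ Real.sqrt a := Real.sqrt_le_sqrt ha
  exact h.comp tendsto_natCast_atTop_atTop

end AuxStmt5

open Real Set Topology in
/-- Limiting drift coefficient b₁ of the adaptive MCMC x-component:
√n (∫_{A_n} ε φ + ∫_{A_n^c} (ψ(x+θε/√n)/ψ(x)) ε φ) → (θ/2) ψ'(x)/ψ(x). -/
theorem stmt_5 (ψ : ℝ → ℝ) (x θ : ℝ) (φ : ℝ → ℝ)
    (hφ : φ = fun ε => (Real.sqrt (2 * Real.pi))⁻¹ * Real.exp (-ε ^ 2 / 2))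
    (hψpos : ∀ y, 0 < ψ y) (hψC2 : ContDiff ℝ 2 ψ)
    (hψint : ∫ y, ψ y = 1)
    (hbdd : ∃ δ > (0:ℝ), ∃ M, ∀ y ∈ Set.Ioo (x - δ) (x + δ), |deriv (deriv ψ) y| ≤ M)
    (hd : deriv ψ x ≠ 0) (hθ : 0 < θ)
    (A : ℕ → Set ℝ)
    (hA : ∀ n, A n = {ε : ℝ | ψ x < ψ (x + θ * ε / Real.sqrt n)}) :
    Tendsto (fun n : ℕ => Real.sqrt n *
        ((∫ ε in A n, ε * φ ε) +
          ∫ ε in (A n)ᶜ, (ψ (x + θ * ε / Real.sqrt n) / ψ x) * ε * φ ε))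
      atTop (nhds ((θ / 2) * (deriv ψ x / ψ x))) := by
  have hφ0 : φ = φ0 := hφ
  subst hφ0
  set c : ℝ := θ * deriv ψ x / ψ x with hc
  have hψx : (0:ℝ) < ψ x := hψpos x
  have hψxne : ψ x ≠ 0 := ne_of_gt hψx
  have hψcont : Continuous ψ := hψC2.continuous
  have hψdiff : Differentiable ℝ ψ := hψC2.differentiable (by norm_num)
  have hcontn : ∀ n : ℕ, Continuous (fun ε : ℝ => ψ (x + θ * ε / Real.sqrt n)) := by
    intro n
    apply hψcont.comp
    exact continuous_const.add ((continuous_const.mul continuous_id).div_const _)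
  have hInt1 : Integrable (fun ε : ℝ => ε * φ0 ε) := int_mul_phi0
  set F : ℕ → ℝ → ℝ := fun n ε =>
    Real.sqrt n * (min 0 (ψ (x + θ * ε / Real.sqrt n) / ψ x - 1) * (ε * φ0 ε)) with hF
  -- Step A : identity for each n
  have hstep : ∀ n : ℕ, Real.sqrt n * ((∫ ε in A n, ε * φ0 ε) +
      ∫ ε in (A n)ᶜ, (ψ (x + θ * ε / Real.sqrt n) / ψ x) * ε * φ0 ε) = ∫ ε, F n ε := by
    intro n
    have hAm : MeasurableSet (A n) := by
      rw [hA n]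
      exact measurableSet_lt measurable_const (hcontn n).measurable
    set g : ℝ → ℝ := fun ε => min 0 (ψ (x + θ * ε / Real.sqrt n) / ψ x - 1) * (ε * φ0 ε)
      with hg
    have hgcont : Continuous g :=
      (continuous_const.min (((hcontn n).div_const _).sub continuous_const)).mul
        (continuous_id.mul phi0_cont)
    have hminb : ∀ ε : ℝ, |min 0 (ψ (x + θ * ε / Real.sqrt n) / ψ x - 1)| ≤ 1 := by
      intro ε
      have h1 : 0 < ψ (x + θ * ε / Real.sqrt n) / ψ x := div_pos (hψpos _) hψx
      refine abs_le.2 ⟨le_min (by norm_num) (by linarith), ?_⟩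
      exact le_trans (min_le_left _ _) (by norm_num)
    have hgint : Integrable g := by
      refine hInt1.abs.mono' hgcont.aestronglyMeasurable ?_
      filter_upwards with ε
      show |min 0 (ψ (x + θ * ε / Real.sqrt n) / ψ x - 1) * (ε * φ0 ε)| ≤ |ε * φ0 ε|
      rw [abs_mul]
      exact mul_le_of_le_one_left (abs_nonneg _) (hminb ε)
    have hIθ : IntegrableOn (fun ε : ℝ => (ψ (x + θ * ε / Real.sqrt n) / ψ x) * ε * φ0 ε)
        ((A n)ᶜ) := by
      refine (hInt1.abs.integrableOn).mono' ?_ ?_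
      · exact ((((hcontn n).div_const _).mul continuous_id).mul phi0_cont).aestronglyMeasurable.restrict
      · filter_upwards [ae_restrict_mem hAm.compl] with ε hε
        have hle : ψ (x + θ * ε / Real.sqrt n) ≤ ψ x := by
          rw [hA n] at hε
          simp only [Set.mem_compl_iff, Set.mem_setOf_eq] at hε
          exact not_lt.1 hε
        have h1 : 0 < ψ (x + θ * ε / Real.sqrt n) / ψ x := div_pos (hψpos _) hψx
        have h2 : ψ (x + θ * ε / Real.sqrt n) / ψ x ≤ 1 := (div_le_one hψx).2 hle
        have h3 : |ψ (x + θ * ε / Real.sqrt n) / ψ x| ≤ 1 := abs_le.2 ⟨by linarith, h2⟩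
        show |ψ (x + θ * ε / Real.sqrt n) / ψ x * ε * φ0 ε| ≤ |ε * φ0 ε|
        rw [mul_assoc, abs_mul]
        exact mul_le_of_le_one_left (abs_nonneg _) h3
    have hzero : ∫ ε : ℝ, ε * φ0 ε = 0 := integral_mul_phi0
    have hsplit := integral_add_compl hAm hInt1
    rw [hzero] at hsplit
    -- ∫_{A n} g = 0
    have hgA : ∫ ε in A n, g ε = 0 := by
      rw [setIntegral_congr_fun hAm (g := fun _ => (0:ℝ)) ?_, integral_zero]
      intro ε hε
      rw [hA n] at hε
      have h1 : (1:ℝ) < ψ (x + θ * ε / Real.sqrt n) / ψ x := (one_lt_div hψx).2 hε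
      rw [hg]
      simp only
      rw [min_eq_left (by linarith), zero_mul]
    have hgAc : ∫ ε in (A n)ᶜ, g ε =
        ∫ ε in (A n)ᶜ, ((ψ (x + θ * ε / Real.sqrt n) / ψ x) * ε * φ0 ε - ε * φ0 ε) := by
      refine setIntegral_congr_fun hAm.compl ?_
      intro ε hε
      have hle : ψ (x + θ * ε / Real.sqrt n) ≤ ψ x := by
        rw [hA n] at hε
        simp only [Set.mem_compl_iff, Set.mem_setOf_eq] at hε
        exact not_lt.1 hε
      have h2 : ψ (x + θ * ε / Real.sqrt n) / ψ x ≤ 1 := (div_le_one hψx).2 hle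
      rw [hg]
      simp only
      rw [min_eq_right (by linarith)]
      ring
    have hsub : ∫ ε in (A n)ᶜ, ((ψ (x + θ * ε / Real.sqrt n) / ψ x) * ε * φ0 ε - ε * φ0 ε)
        = (∫ ε in (A n)ᶜ, (ψ (x + θ * ε / Real.sqrt n) / ψ x) * ε * φ0 ε)
          - ∫ ε in (A n)ᶜ, ε * φ0 ε :=
      integral_sub hIθ hInt1.integrableOn
    have hgtot : ∫ ε, g ε = (∫ ε in (A n)ᶜ, (ψ (x + θ * ε / Real.sqrt n) / ψ x) * ε * φ0 ε)
        - ∫ ε in (A n)ᶜ, ε * φ0 ε := by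
      rw [← integral_add_compl hAm hgint, hgA, hgAc, hsub, zero_add]
    have hFg : ∫ ε, F n ε = Real.sqrt n * ∫ ε, g ε := by
      rw [hF]
      simp only
      rw [← integral_const_mul]
    rw [hFg, hgtot]
    have hAeq : ∫ ε in A n, ε * φ0 ε = - ∫ ε in (A n)ᶜ, ε * φ0 ε := by linarith
    rw [hAeq]
    ring
  -- reduce to DCT statement
  have hlim_eq : (θ / 2) * (deriv ψ x / ψ x) = c / 2 := by rw [hc]; ring
  rw [hlim_eq, ← integral_min_phi0 c]
  refine Tendsto.congr (fun n => (hstep n).symm) ?_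
  -- MVT bound
  obtain ⟨K₀, hK₀⟩ := (isCompact_Icc (a := x - 1) (b := x + 1)).exists_bound_of_continuousOn
    (hψC2.continuous_deriv one_le_two).continuousOn
  set K : ℝ := |K₀| with hKdef
  have hK : ∀ y ∈ Icc (x - 1) (x + 1), ‖deriv ψ y‖ ≤ K := fun y hy =>
    (hK₀ y hy).trans (le_abs_self _)
  have hK0 : 0 ≤ K := abs_nonneg _
  have hlip : ∀ t : ℝ, |t| ≤ 1 → |ψ (x + t) - ψ x| ≤ K * |t| := by
    intro t ht
    have habs := abs_le.1 ht
    have h1 : x ∈ Icc (x - 1) (x + 1) := ⟨by linarith, by linarith⟩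
    have h2 : x + t ∈ Icc (x - 1) (x + 1) := ⟨by linarith, by linarith⟩
    have := Convex.norm_image_sub_le_of_norm_deriv_le
      (fun y _ => hψdiff y) hK (convex_Icc _ _) h1 h2
    simpa using this
  set C : ℝ := K * θ / ψ x + θ with hC
  have hCpos : 0 ≤ C := by positivity
  -- DCT
  refine tendsto_integral_of_dominated_convergence (bound := fun ε => C * (ε ^ 2 * φ0 ε))
    ?_ ?_ ?_ ?_
  · intro n
    exact (continuous_const.mul
      ((continuous_const.min (((hcontn n).div_const _).sub continuous_const)).mul
        (continuous_id.mul phi0_cont))).aestronglyMeasurable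
  · exact int_sq_phi0.const_mul C
  · -- bound
    intro n
    refine ae_of_all _ fun ε => ?_
    have hs0 : (0:ℝ) ≤ Real.sqrt n := Real.sqrt_nonneg _
    have hφp := phi0_pos ε
    set r : ℝ := ψ (x + θ * ε / Real.sqrt n) / ψ x with hr
    have hrpos : 0 < r := div_pos (hψpos _) hψx
    have habsm : |min 0 (r - 1)| ≤ 1 := by
      refine abs_le.2 ⟨le_min (by norm_num) (by linarith), ?_⟩
      exact le_trans (min_le_left _ _) (by norm_num)
    have hkey : Real.sqrt n * |min 0 (r - 1)| ≤ C * |ε| := by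
      rcases le_or_gt (θ * |ε|) (Real.sqrt n) with h1 | h1
      · by_cases hε : ε = 0
        · subst hε
          have : r = 1 := by rw [hr]; simp [div_self hψxne]
          rw [this]
          simp
        · have hεpos : 0 < |ε| := abs_pos.2 hε
          have hspos : 0 < Real.sqrt n := lt_of_lt_of_le (by positivity) h1
          have htabs : |θ * ε / Real.sqrt n| = θ * |ε| / Real.sqrt n := by
            rw [abs_div, abs_mul, abs_of_pos hθ, abs_of_pos hspos]
          have ht1 : |θ * ε / Real.sqrt n| ≤ 1 := by
            rw [htabs]
            exact (div_le_one hspos).2 h1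
          have hψb := hlip (θ * ε / Real.sqrt n) ht1
          have hrm : r - 1 = (ψ (x + θ * ε / Real.sqrt n) - ψ x) / ψ x := by
            rw [hr]; field_simp
          have habs2 : |min 0 (r - 1)| ≤ K * (θ * |ε| / Real.sqrt n) / ψ x := by
            refine (abs_min_zero_le _).trans ?_
            rw [hrm, abs_div, abs_of_pos hψx, ← htabs]
            gcongr
          have : Real.sqrt n * |min 0 (r - 1)| ≤
              Real.sqrt n * (K * (θ * |ε| / Real.sqrt n) / ψ x) :=
            mul_le_mul_of_nonneg_left habs2 hs0
          refine this.trans ?_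
          have heq : Real.sqrt n * (K * (θ * |ε| / Real.sqrt n) / ψ x)
              = (K * θ / ψ x) * |ε| := by
            field_simp
          rw [heq, hC]
          nlinarith [abs_nonneg ε, hθ.le]
      · calc Real.sqrt n * |min 0 (r - 1)| ≤ Real.sqrt n * 1 :=
              mul_le_mul_of_nonneg_left habsm hs0
          _ ≤ θ * |ε| := by linarith
          _ ≤ C * |ε| := by
              have h2 : 0 ≤ K * θ / ψ x := by positivity
              rw [hC]
              nlinarith [mul_nonneg h2 (abs_nonneg ε)]
    -- assemble
    show |Real.sqrt n * (min 0 (r - 1) * (ε * φ0 ε))| ≤ C * (ε ^ 2 * φ0 ε)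
    rw [abs_mul, abs_mul, abs_mul, abs_of_nonneg hs0, abs_of_pos hφp, ← mul_assoc]
    calc Real.sqrt n * |min 0 (r - 1)| * (|ε| * φ0 ε)
        ≤ (C * |ε|) * (|ε| * φ0 ε) := by
          exact mul_le_mul_of_nonneg_right hkey (by positivity)
      _ = C * ((|ε| * |ε|) * φ0 ε) := by ring
      _ = C * (ε ^ 2 * φ0 ε) := by rw [abs_mul_abs_self, ← sq]
  · -- pointwise limit
    refine ae_of_all _ fun ε => ?_
    by_cases hε : ε = 0
    · subst hε
      have hfz : ∀ n : ℕ, F n 0 = 0 := by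
        intro n
        rw [hF]
        simp
      simp only [hfz]
      have : min 0 (c * 0) * (0 * φ0 0) = 0 := by simp
      rw [this]
      exact tendsto_const_nhds
    · have hsq := sqrt_nat_tendsto
      have htn : Tendsto (fun n : ℕ => θ * ε / Real.sqrt n) atTop (𝓝 0) :=
        Tendsto.div_atTop tendsto_const_nhds hsq
      have hyn : Tendsto (fun n : ℕ => x + θ * ε / Real.sqrt n) atTop (𝓝 x) := by
        have := htn.const_add x
        simpa using this
      have hne : ∀ᶠ n : ℕ in atTop, x + θ * ε / Real.sqrt n ≠ x := by
        filter_upwards [eventually_ge_atTop 1] with n hn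
        have hnpos : (0:ℝ) < Real.sqrt n := by
          rw [Real.sqrt_pos]
          exact_mod_cast Nat.lt_of_lt_of_le Nat.zero_lt_one hn
        have : θ * ε / Real.sqrt n ≠ 0 := by
          apply div_ne_zero (mul_ne_zero (ne_of_gt hθ) hε) (ne_of_gt hnpos)
        intro hcon
        apply this
        linarith [hcon]
      have hwithin : Tendsto (fun n : ℕ => x + θ * ε / Real.sqrt n) atTop (𝓝[≠] x) :=
        tendsto_nhdsWithin_of_tendsto_nhds_of_eventually_within _ hyn
          (by filter_upwards [hne] with n hn; exact hn)
      have hder := (hψdiff x).hasDerivAt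
      have hslope := hasDerivAt_iff_tendsto_slope.mp hder
      have hcomp : Tendsto (fun n : ℕ => slope ψ x (x + θ * ε / Real.sqrt n)) atTop
          (𝓝 (deriv ψ x)) := hslope.comp hwithin
      have hmul : Tendsto (fun n : ℕ => (θ * ε / ψ x) * slope ψ x (x + θ * ε / Real.sqrt n))
          atTop (𝓝 ((θ * ε / ψ x) * deriv ψ x)) := hcomp.const_mul _
      have hRn : ∀ᶠ n : ℕ in atTop,
          (θ * ε / ψ x) * slope ψ x (x + θ * ε / Real.sqrt n)
            = Real.sqrt n * (ψ (x + θ * ε / Real.sqrt n) / ψ x - 1) := by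
        filter_upwards [eventually_ge_atTop 1] with n hn
        have hnpos : (0:ℝ) < Real.sqrt n := by
          rw [Real.sqrt_pos]
          exact_mod_cast Nat.lt_of_lt_of_le Nat.zero_lt_one hn
        rw [slope_def_field]
        have hx1 : x + θ * ε / Real.sqrt n - x = θ * ε / Real.sqrt n := by ring
        rw [hx1]
        have htne : θ * ε / Real.sqrt n ≠ 0 :=
          div_ne_zero (mul_ne_zero (ne_of_gt hθ) hε) (ne_of_gt hnpos)
        field_simp
      have hRlim : Tendsto (fun n : ℕ => Real.sqrt n * (ψ (x + θ * ε / Real.sqrt n) / ψ x - 1))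
          atTop (𝓝 (c * ε)) := by
        have hval : (θ * ε / ψ x) * deriv ψ x = c * ε := by rw [hc]; ring
        rw [← hval]
        exact hmul.congr' hRn
      have hminlim : Tendsto (fun n : ℕ =>
          min 0 (Real.sqrt n * (ψ (x + θ * ε / Real.sqrt n) / ψ x - 1))) atTop
          (𝓝 (min 0 (c * ε))) := tendsto_const_nhds.min hRlim
      have hfinal := hminlim.mul (tendsto_const_nhds (x := ε * φ0 ε))
      refine hfinal.congr fun n => ?_
      rw [hF]
      simp only
      rw [← mul_min_zero _ _ (Real.sqrt_nonneg (n:ℝ)), mul_assoc]
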